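/- Let G be a graph, C a proper coloring of G with χ(G) colors, and C₁ a color class in C. Let 𝒢 be the subgroup of Aut(G) of automorphisms fixing C₁ setwise. For A ∈ 𝒢 let θ_A be the number of orbits of ⟨A⟩ on C₁. If for some integer t ≥ 2, Σ_{A ∈ 𝒢} t^{θ_A - |C₁|} < r, where r is the least prime dividing |𝒢|, then χ_D(G) ≤ χ(G) + t - 1. -/

import Mathlib

/-- A coloring is proper and distinguishing if it is proper and no nontrivial
automorphism preserves every color class. -/
def IsProperDistinguishing {V : Type*} (G : SimpleGraph V) {β : Type*} (c : V → β) : Prop :=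
  (∀ ⦃u v : V⦄, G.Adj u v → c u ≠ c v) ∧
    ∀ e : G ≃g G, (∀ v, c (e v) = c v) → ∀ v, e v = v

/-- The distinguishing chromatic number. -/
noncomputable def distChromaticNumber {V : Type*} (G : SimpleGraph V) : ℕ :=
  sInf {r : ℕ | ∃ c : V → Fin r, IsProperDistinguishing G c}

/-- The number of orbits of the cyclic group generated by a permutation e that meet C. -/
noncomputable def orbitCount {V : Type*} (e : Equiv.Perm V) (C : Set V) : ℕ :=
  Nat.card {s : Set V // ∃ v ∈ C, s = {w | ∃ n : ℤ, (e ^ n) v = w}}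

lemma fix_card_le_aux {V : Type*} [Finite V] (C : Set V) (σ : Equiv.Perm V)
    (hσ : ∀ v ∈ C, σ v ∈ C) (hσ' : ∀ v ∈ C, σ⁻¹ v ∈ C) (t : ℕ) :
    Nat.card {d : ↥C → Fin t // ∀ (v : V) (hv : v ∈ C), d ⟨σ v, hσ v hv⟩ = d ⟨v, hv⟩}
      ≤ t ^ orbitCount σ C := by
  classical
  set D := {d : ↥C → Fin t // ∀ (v : V) (hv : v ∈ C), d ⟨σ v, hσ v hv⟩ = d ⟨v, hv⟩} with hD
  set Orb := {s : Set V // ∃ v ∈ C, s = {w | ∃ n : ℤ, (σ ^ n) v = w}} with hOrb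
  have key : ∀ d : D, ∀ (n : ℤ) (v : V) (hv : v ∈ C),
      ∃ h : (σ ^ n) v ∈ C, d.1 ⟨(σ ^ n) v, h⟩ = d.1 ⟨v, hv⟩ := by
    intro d n
    induction n using Int.induction_on with
    | zero => intro v hv; exact ⟨by simpa using hv, by simp⟩
    | succ n ih =>
      intro v hv
      obtain ⟨h1, h2⟩ := ih (σ v) (hσ v hv)
      have e1 : (σ ^ ((n : ℤ) + 1)) v = (σ ^ (n : ℤ)) (σ v) := by
        rw [zpow_add_one]; rfl
      refine ⟨e1 ▸ h1, ?_⟩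
      have := d.2 v hv
      calc d.1 ⟨(σ ^ ((n : ℤ) + 1)) v, _⟩ = d.1 ⟨(σ ^ (n : ℤ)) (σ v), h1⟩ :=
            congrArg d.1 (Subtype.ext e1)
        _ = d.1 ⟨σ v, hσ v hv⟩ := h2
        _ = d.1 ⟨v, hv⟩ := this
    | pred n ih =>
      intro v hv
      obtain ⟨h1, h2⟩ := ih (σ⁻¹ v) (hσ' v hv)
      have e1 : (σ ^ (-(n : ℤ) - 1)) v = (σ ^ (-(n : ℤ))) (σ⁻¹ v) := by
        rw [zpow_sub_one]; rfl
      have hinv : d.1 ⟨σ⁻¹ v, hσ' v hv⟩ = d.1 ⟨v, hv⟩ := by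
        have := d.2 (σ⁻¹ v) (hσ' v hv)
        have e2 : (⟨σ (σ⁻¹ v), hσ _ (hσ' v hv)⟩ : ↥C) = ⟨v, hv⟩ :=
          Subtype.ext (σ.apply_symm_apply v)
        rw [e2] at this
        exact this.symm
      refine ⟨e1 ▸ h1, ?_⟩
      calc d.1 ⟨(σ ^ (-(n : ℤ) - 1)) v, _⟩ = d.1 ⟨(σ ^ (-(n : ℤ))) (σ⁻¹ v), h1⟩ :=
            congrArg d.1 (Subtype.ext e1)
        _ = d.1 ⟨σ⁻¹ v, hσ' v hv⟩ := h2
        _ = d.1 ⟨v, hv⟩ := hinv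
  have hfin : Finite Orb := by infer_instance
  set F : D → (Orb → Fin t) := fun d s => d.1 ⟨s.2.choose, s.2.choose_spec.1⟩ with hF
  have hFinj : Function.Injective F := by
    intro d d' h
    apply Subtype.ext
    funext w
    set s : Orb := ⟨{x | ∃ n : ℤ, (σ ^ n) w.1 = x}, ⟨w.1, w.2, rfl⟩⟩ with hs
    have hvC : s.2.choose ∈ C := s.2.choose_spec.1
    have hvs : s.1 = {x | ∃ n : ℤ, (σ ^ n) s.2.choose = x} := s.2.choose_spec.2
    have hw : w.1 ∈ s.1 := ⟨0, by simp⟩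
    rw [hvs] at hw
    obtain ⟨n, hn⟩ := hw
    have key1 := key d n s.2.choose hvC
    have key2 := key d' n s.2.choose hvC
    obtain ⟨hm, hd⟩ := key1
    obtain ⟨hm', hd'⟩ := key2
    have ew : (⟨(σ ^ n) s.2.choose, hm⟩ : ↥C) = w := Subtype.ext hn
    have ew' : (⟨(σ ^ n) s.2.choose, hm'⟩ : ↥C) = w := Subtype.ext hn
    have hFd : F d s = F d' s := congrFun h s
    calc d.1 w = d.1 ⟨(σ ^ n) s.2.choose, hm⟩ := by rw [ew]
      _ = d.1 ⟨s.2.choose, hvC⟩ := hd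
      _ = d'.1 ⟨s.2.choose, hvC⟩ := hFd
      _ = d'.1 ⟨(σ ^ n) s.2.choose, hm'⟩ := hd'.symm
      _ = d'.1 w := by rw [ew']
  calc Nat.card D ≤ Nat.card (Orb → Fin t) := Nat.card_le_card_of_injective F hFinj
    _ = t ^ orbitCount σ C := by
        rw [Nat.card_fun, Nat.card_eq_fintype_card, Fintype.card_fin]
        rfl

/-- A variant of the motion lemma: if Σ_{A ∈ 𝒢} t^{θ_A - |C₁|} < r, the least prime
dividing |𝒢|, then χ_D(G) ≤ χ(G) + t - 1. -/
theorem stmt_13 {V : Type*} [Fintype V] [DecidableEq V] (G : SimpleGraph V)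
    (k : ℕ) (hk : G.chromaticNumber = (k : ℕ∞)) (c : G.Coloring (Fin k)) (i : Fin k)
    (C₁ : Set V) (hC₁ : C₁ = {v : V | c v = i})
    (𝒢 : Set (G ≃g G)) (h𝒢 : 𝒢 = {e : G ≃g G | (⇑e) '' C₁ = C₁})
    (t : ℕ) (ht : 2 ≤ t)
    (r : ℕ) (hr : r.Prime) (hdvd : r ∣ 𝒢.ncard)
    (hmin : ∀ q : ℕ, q.Prime → q ∣ 𝒢.ncard → r ≤ q)
    (hsum : ∑ᶠ e ∈ 𝒢, (t : ℝ) ^ ((orbitCount e.toEquiv C₁ : ℤ) - (C₁.ncard : ℤ))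
        < (r : ℝ)) :
    distChromaticNumber G ≤ k + t - 1 := by
  classical
  have hk1 : 1 ≤ k := i.pos
  -- the subgroup of Perm V corresponding to 𝒢
  set S : Subgroup (Equiv.Perm V) :=
    { carrier := {σ : Equiv.Perm V | (∀ u v : V, G.Adj (σ u) (σ v) ↔ G.Adj u v) ∧ σ '' C₁ = C₁}
      one_mem' := ⟨fun u v => Iff.rfl, by simp⟩
      mul_mem' := by
        rintro σ τ ⟨hσ1, hσ2⟩ ⟨hτ1, hτ2⟩
        refine ⟨fun u v => by rw [Equiv.Perm.mul_apply, Equiv.Perm.mul_apply, hσ1, hτ1], ?_⟩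
        rw [show ⇑(σ * τ) = ⇑σ ∘ ⇑τ from rfl, Set.image_comp, hτ2, hσ2]
      inv_mem' := by
        rintro σ ⟨hσ1, hσ2⟩
        refine ⟨fun u v => ?_, ?_⟩
        · rw [← hσ1 (σ⁻¹ u) (σ⁻¹ v)]
          simp
        · conv_lhs => rw [← hσ2]
          rw [← Set.image_comp]
          simp } with hS
  have mem_S_iff : ∀ e : G ≃g G, e.toEquiv ∈ S ↔ e ∈ 𝒢 := by
    intro e
    rw [h𝒢]
    constructor
    · rintro ⟨-, h2⟩; exact h2
    · intro h2; exact ⟨fun u v => e.map_adj_iff, h2⟩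
  have hGfin : Finite (G ≃g G) :=
    Finite.of_injective (fun e => e.toEquiv) (fun a b hab => by
      cases a; cases b; simpa using hab)
  haveI : Fintype ↥S := Fintype.ofFinite _
  haveI : Fintype ↥𝒢 := Fintype.ofFinite _
  haveI : Fintype ↥C₁ := Fintype.ofFinite _
  set eqv : ↥𝒢 ≃ ↥S :=
    { toFun := fun e => ⟨e.1.toEquiv, (mem_S_iff e.1).2 e.2⟩
      invFun := fun σ => ⟨⟨σ.1, fun {a b} => σ.2.1 a b⟩, by
        rw [h𝒢]; exact σ.2.2⟩
      left_inv := fun e => rfl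
      right_inv := fun σ => rfl } with heqv
  have hcard : 𝒢.ncard = Nat.card ↥S := by
    rw [← Nat.card_coe_set_eq]; exact Nat.card_congr eqv
  -- membership of images
  have hmem : ∀ σ : ↥S, ∀ v ∈ C₁, σ.1 v ∈ C₁ := by
    intro σ v hv
    have := σ.2.2
    rw [← this]
    exact Set.mem_image_of_mem _ hv
  set m : ℕ := C₁.ncard with hm
  have hmcard : Nat.card ↥C₁ = m := Nat.card_coe_set_eq C₁
  -- the predicate "σ fixes the coloring d of C₁"
  set pred : ↥S → (↥C₁ → Fin t) → Prop := fun σ d =>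
    ∀ (v : V) (hv : v ∈ C₁), d ⟨σ.1 v, hmem σ v hv⟩ = d ⟨v, hv⟩ with hpred
  -- the sum over S of t^θ, as naturals, is < r * t^m
  have hsumS : ∑ σ : ↥S, t ^ orbitCount σ.1 C₁ < r * t ^ m := by
    have ht0 : (t : ℝ) ≠ 0 := by
      have : t ≠ 0 := by omega
      exact_mod_cast this
    have e1 : ∑ᶠ e ∈ 𝒢, (t : ℝ) ^ ((orbitCount e.toEquiv C₁ : ℤ) - (m : ℤ))
        = ∑ e : ↥𝒢, (t : ℝ) ^ ((orbitCount e.1.toEquiv C₁ : ℤ) - (m : ℤ)) := by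
      rw [← finsum_set_coe_eq_finsum_mem, finsum_eq_sum_of_fintype]
    have e2 : ∑ e : ↥𝒢, (t : ℝ) ^ ((orbitCount e.1.toEquiv C₁ : ℤ) - (m : ℤ))
        = ∑ σ : ↥S, (t : ℝ) ^ ((orbitCount σ.1 C₁ : ℤ) - (m : ℤ)) :=
      Fintype.sum_equiv eqv _ _ (fun e => rfl)
    have hR : ∑ σ : ↥S, (t : ℝ) ^ ((orbitCount σ.1 C₁ : ℤ) - (m : ℤ)) < r := by
      rw [← e2, ← e1]; exact hsum
    have hR2 : (∑ σ : ↥S, (t : ℝ) ^ (orbitCount σ.1 C₁ : ℤ)) / (t : ℝ) ^ (m : ℤ) < r := by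
      rw [Finset.sum_div]
      refine lt_of_eq_of_lt ?_ hR
      refine Finset.sum_congr rfl (fun σ _ => ?_)
      rw [zpow_sub₀ ht0]
    have hpow : (0 : ℝ) < (t : ℝ) ^ (m : ℤ) := by
      have : (0 : ℝ) < (t : ℝ) := by
        have : 0 < t := by omega
        exact_mod_cast this
      positivity
    have hR3 : (∑ σ : ↥S, (t : ℝ) ^ (orbitCount σ.1 C₁ : ℤ)) < r * (t : ℝ) ^ (m : ℤ) :=
      (div_lt_iff₀ hpow).mp hR2
    have hcast : ((∑ σ : ↥S, t ^ orbitCount σ.1 C₁ : ℕ) : ℝ) < ((r * t ^ m : ℕ) : ℝ) := by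
      push_cast
      simpa [zpow_natCast] using hR3
    exact_mod_cast hcast
  -- stabilizer subgroups
  set Stab : (↥C₁ → Fin t) → Subgroup ↥S := fun d =>
    { carrier := {σ : ↥S | pred σ d}
      one_mem' := fun v hv => rfl
      mul_mem' := by
        intro σ τ hσ hτ v hv
        exact (hσ (τ.1 v) (hmem τ v hv)).trans (hτ v hv)
      inv_mem' := by
        intro σ hσ v hv
        exact (hσ (σ.1⁻¹ v) (hmem σ⁻¹ v hv)).symm.trans
          (congrArg d (Subtype.ext (σ.1.apply_symm_apply v))) } with hStab
  have stab_exists : ∀ d : ↥C₁ → Fin t, (∃ σ : ↥S, σ ≠ 1 ∧ pred σ d) →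
      r ≤ (Finset.univ.filter (fun σ : ↥S => pred σ d)).card := by
    rintro d ⟨σ, hσ1, hσ2⟩
    have e1 : Nat.card ↥(Stab d) = (Finset.univ.filter (fun σ : ↥S => pred σ d)).card := by
      have h0 : Nat.card ↥(Stab d) = Nat.card {σ : ↥S // pred σ d} :=
        Nat.card_congr (Equiv.subtypeEquivRight (fun σ => Iff.rfl))
      rw [h0, Nat.card_eq_fintype_card, Fintype.card_subtype]
    rw [← e1]
    have hnt : Nontrivial ↥(Stab d) := by
      refine ⟨⟨1, (Stab d).one_mem⟩, ⟨σ, hσ2⟩, ?_⟩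
      simp only [ne_eq, Subtype.mk.injEq]
      exact fun h => hσ1 h.symm
    have hpos : 0 < Nat.card ↥(Stab d) := Nat.card_pos
    have h2 : 1 < Nat.card ↥(Stab d) := Finite.one_lt_card
    have hq : (Nat.card ↥(Stab d)).minFac.Prime := Nat.minFac_prime (by omega)
    have hq1 : (Nat.card ↥(Stab d)).minFac ∣ 𝒢.ncard := by
      rw [hcard]
      exact dvd_trans (Nat.minFac_dvd _) (Subgroup.card_subgroup_dvd_card (Stab d))
    exact le_trans (hmin _ hq hq1) (Nat.minFac_le hpos)
  -- fixed-point counts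
  have fix_le : ∀ σ : ↥S,
      (Finset.univ.filter (fun d : ↥C₁ → Fin t => pred σ d)).card ≤ t ^ orbitCount σ.1 C₁ := by
    intro σ
    have h1 : (Finset.univ.filter (fun d : ↥C₁ → Fin t => pred σ d)).card
        = Nat.card {d : ↥C₁ → Fin t // pred σ d} := by
      rw [Nat.card_eq_fintype_card, Fintype.card_subtype]
    rw [h1]
    exact fix_card_le_aux C₁ σ.1 (fun v hv => hmem σ v hv) (fun v hv => hmem σ⁻¹ v hv) t
  -- there is a distinguishing coloring of C₁
  have main : ∃ d : ↥C₁ → Fin t, ∀ σ : ↥S, pred σ d → σ = 1 := by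
    by_contra hcon
    push_neg at hcon
    have h1 : ∀ d : ↥C₁ → Fin t, ∃ σ : ↥S, σ ≠ 1 ∧ pred σ d := by
      intro d
      obtain ⟨σ, hσ1, hσ2⟩ := hcon d
      exact ⟨σ, hσ2, hσ1⟩
    have hdc : ∑ σ : ↥S, (Finset.univ.filter (fun d : ↥C₁ → Fin t => pred σ d)).card
        = ∑ d : ↥C₁ → Fin t, (Finset.univ.filter (fun σ : ↥S => pred σ d)).card := by
      simp_rw [Finset.card_filter]
      exact Finset.sum_comm
    have hge : r * t ^ m ≤ ∑ d : ↥C₁ → Fin t, (Finset.univ.filter (fun σ : ↥S => pred σ d)).card := by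
      calc r * t ^ m = ∑ _d : ↥C₁ → Fin t, r := by
            rw [Finset.sum_const, smul_eq_mul, mul_comm]
            congr 1
            rw [Finset.card_univ, ← Nat.card_eq_fintype_card, Nat.card_fun, hmcard,
              Nat.card_eq_fintype_card, Fintype.card_fin]
        _ ≤ _ := Finset.sum_le_sum (fun d _ => stab_exists d (h1 d))
    have hlt : ∑ σ : ↥S, (Finset.univ.filter (fun d : ↥C₁ → Fin t => pred σ d)).card
        < r * t ^ m := lt_of_le_of_lt (Finset.sum_le_sum (fun σ _ => fix_le σ)) hsumS
    rw [hdc] at hlt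
    exact absurd hge (not_le.mpr hlt)
  obtain ⟨d₀, hd₀⟩ := main
  haveI : NeZero t := ⟨by omega⟩
  have hCmem : ∀ v, v ∈ C₁ ↔ c v = i := fun v => by rw [hC₁]; exact Iff.rfl
  have hdpos : ∀ x : Fin t, x ≠ 0 → 1 ≤ x.1 := by
    intro x hx
    have := (Fin.pos_iff_ne_zero' x).mpr hx
    exact this
  set f : V → ℕ := fun v =>
    if hv : v ∈ C₁ then (if d₀ ⟨v, hv⟩ = 0 then i.1 else k - 1 + (d₀ ⟨v, hv⟩).1)
    else (c v).1 with hf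
  have hfC : ∀ (v : V) (hv : v ∈ C₁),
      f v = if d₀ ⟨v, hv⟩ = 0 then i.1 else k - 1 + (d₀ ⟨v, hv⟩).1 := by
    intro v hv; simp only [hf]; rw [dif_pos hv]
  have hfN : ∀ v : V, v ∉ C₁ → f v = (c v).1 := by
    intro v hv; simp only [hf]; rw [dif_neg hv]
  have hfb : ∀ v, f v < k + (t - 1) := by
    intro v
    by_cases hv : v ∈ C₁
    · rw [hfC v hv]
      split_ifs with h
      · have := i.2; omega
      · have h1 := (d₀ ⟨v, hv⟩).2
        omega
    · rw [hfN v hv]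
      have := (c v).2
      omega
  set c' : V → Fin (k + (t - 1)) := fun v => ⟨f v, hfb v⟩ with hc'
  have hchar : ∀ v, v ∈ C₁ ↔ (f v = i.1 ∨ k ≤ f v) := by
    intro v
    constructor
    · intro hv
      rw [hfC v hv]
      split_ifs with h
      · exact Or.inl rfl
      · have h1 := hdpos _ h
        right; omega
    · intro h
      by_contra hv
      rw [hfN v hv] at h
      rcases h with h | h
      · exact hv ((hCmem v).mpr (Fin.ext h))
      · have := (c v).2; omega
  have hproper : ∀ ⦃u v : V⦄, G.Adj u v → c' u ≠ c' v := by
    intro u v hadj heq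
    have hfe : f u = f v := congrArg Fin.val heq
    by_cases hu : u ∈ C₁ <;> by_cases hv : v ∈ C₁
    · exact c.valid hadj (by rw [(hCmem u).mp hu, (hCmem v).mp hv])
    · rw [hfC u hu, hfN v hv] at hfe
      have hvne : (c v).1 ≠ i.1 := fun h => hv ((hCmem v).mpr (Fin.ext h))
      have hvlt := (c v).2
      split_ifs at hfe with h
      · exact hvne hfe.symm
      · have := hdpos _ h; omega
    · rw [hfN u hu, hfC v hv] at hfe
      have hune : (c u).1 ≠ i.1 := fun h => hu ((hCmem u).mpr (Fin.ext h))
      have hult := (c u).2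
      split_ifs at hfe with h
      · exact hune hfe
      · have := hdpos _ h; omega
    · rw [hfN u hu, hfN v hv] at hfe
      exact c.valid hadj (Fin.ext hfe)
  have hdist : ∀ e : G ≃g G, (∀ v, c' (e v) = c' v) → ∀ v, e v = v := by
    intro e he
    have hfe : ∀ v, f (e v) = f v := fun v => congrArg Fin.val (he v)
    have hA : ∀ v, v ∈ C₁ ↔ e v ∈ C₁ := by
      intro v
      rw [hchar v, hchar (e v), hfe v]
    have himg : ⇑e.toEquiv '' C₁ = C₁ := by
      apply Set.Subset.antisymm
      · rintro w ⟨v, hv, rfl⟩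
        exact (hA v).mp hv
      · intro w hw
        refine ⟨e.symm w, ?_, e.apply_symm_apply w⟩
        exact (hA (e.symm w)).mpr (by rw [e.apply_symm_apply]; exact hw)
    set σe : ↥S := ⟨e.toEquiv, ⟨fun u v => e.map_adj_iff, himg⟩⟩ with hσe
    have hpe : pred σe d₀ := by
      intro v hv
      have hev : e v ∈ C₁ := (hA v).mp hv
      have h1 := hfe v
      rw [hfC v hv, hfC (e v) hev] at h1
      show d₀ ⟨e v, hev⟩ = d₀ ⟨v, hv⟩
      set a := d₀ ⟨e v, hev⟩ with ha
      set b := d₀ ⟨v, hv⟩ with hb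
      have hia := i.2
      split_ifs at h1 with h2 h3 h3
      · rw [h2, h3]
      · have := hdpos _ h3; omega
      · have := hdpos _ h2; omega
      · exact Fin.ext (by omega)
    have h1 := hd₀ σe hpe
    intro v
    have h3 : e.toEquiv = (1 : Equiv.Perm V) := congrArg Subtype.val h1
    calc e v = e.toEquiv v := rfl
      _ = (1 : Equiv.Perm V) v := by rw [h3]
      _ = v := rfl
  have hfin : (k + (t - 1)) ∈ {r : ℕ | ∃ c : V → Fin r, IsProperDistinguishing G c} :=
    ⟨c', hproper, hdist⟩
  have hle : distChromaticNumber G ≤ k + (t - 1) := Nat.sInf_le hfin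
  omega
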